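/- Fix a nonabelian finite simple group S, a positive integer t, a prime p, and a positive real number M. Set N := S^t (the direct product of t copies of S), and let ι_S : S → Aut(S) and ι_N : N → Aut(N) denote the injective conjugation homomorphisms. Suppose that for every automorphism α ∈ Aut(S), the coset ι_S(S)·α ⊆ Aut(S) contains an element x of p-power order whose orbit under conjugation by ι_S(S) has size at least M. Then for every element g ∈ Aut(N) of p-power order, the coset ι_N(N)·g ⊆ Aut(N) contains at least M^t elements of p-power order. -/

import Mathlib

set_option linter.unusedSectionVars false
set_option maxHeartbeats 1000000

section Helpers

variable {G : Type*} [Group G]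

private lemma conj_aut_eq (β : MulAut G) (m : G) :
    β * MulAut.conj m * β⁻¹ = MulAut.conj (β m) := by
  ext v
  simp [MulAut.conj, mul_assoc]

private lemma conj_comm_iff (x a b : G) :
    a * x * a⁻¹ = b * x * b⁻¹ ↔ x * (a⁻¹ * b) = (a⁻¹ * b) * x := by
  constructor
  · intro h
    have : a⁻¹ * (a * x * a⁻¹) * b = a⁻¹ * (b * x * b⁻¹) * b := by rw [h]
    simpa [mul_assoc] using this
  · intro h
    have : a * (x * (a⁻¹ * b)) * b⁻¹ = a * ((a⁻¹ * b) * x) * b⁻¹ := by rw [h]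
    simpa [mul_assoc] using this

/-- Lemma Q : card of image of a map whose fibers are left cosets of K. -/
private lemma card_range_mul_card_subgroup {X : Type*} [Finite G] (f : G → X) (K : Subgroup G)
    (h : ∀ a b : G, f a = f b ↔ a⁻¹ * b ∈ K) :
    Nat.card (Set.range f) * Nat.card K = Nat.card G := by
  have e : (G ⧸ K) ≃ Set.range f := by
    refine Equiv.ofBijective (fun q => Quotient.liftOn' q
      (fun g => (⟨f g, Set.mem_range_self g⟩ : Set.range f)) ?_) ⟨?_, ?_⟩
    · intro a b hab
      rw [QuotientGroup.leftRel_apply] at hab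
      exact Subtype.ext ((h a b).mpr hab)
    · intro q₁ q₂
      induction q₁ using Quotient.inductionOn'
      induction q₂ using Quotient.inductionOn'
      intro hq
      exact QuotientGroup.eq.mpr ((h _ _).mp (congrArg Subtype.val hq))
    · rintro ⟨y, g, rfl⟩
      exact ⟨QuotientGroup.mk g, rfl⟩
  have h1 : Nat.card (Set.range f) = K.index := by
    rw [← Nat.card_congr e]; rfl
  rw [h1, Subgroup.index_mul_card]

private lemma orderOf_conj_eq (c y : G) : orderOf (c * y * c⁻¹) = orderOf y :=
  (MulAut.conj c).orderOf_eq y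

end Helpers

section Struct

variable {S : Type*} [Group S] [Finite S] [IsSimpleGroup S] {t : ℕ}

private lemma center_eq_bot (hnab : ∃ a b : S, a * b ≠ b * a) :
    ∀ z : S, (∀ y : S, z * y = y * z) → z = 1 := by
  intro z hz
  rcases IsSimpleGroup.eq_bot_or_eq_top_of_normal (Subgroup.center S)
    (by infer_instance) with h | h
  · have : z ∈ Subgroup.center S := Subgroup.mem_center_iff.mpr (fun y => (hz y).symm)
    rw [h] at this
    exact this
  · exfalso
    obtain ⟨a, b, hab⟩ := hnab
    have : a ∈ Subgroup.center S := by rw [h]; trivial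
    exact hab ((Subgroup.mem_center_iff.mp this b).symm)

private def Hgp (t : ℕ) (S : Type*) [Group S] (i : Fin t) : Subgroup (Fin t → S) :=
  (MonoidHom.mulSingle (fun _ : Fin t => S) i).range

private lemma Hgp_normal (i : Fin t) : (Hgp t S i).Normal := by
  constructor
  rintro n ⟨s, rfl⟩ u
  refine ⟨u i * s * (u i)⁻¹, ?_⟩
  funext j
  by_cases h : j = i
  · subst h; simp [MonoidHom.mulSingle_apply]
  · simp [MonoidHom.mulSingle_apply, Pi.mulSingle, Function.update, h]

private lemma card_Hgp (i : Fin t) : Nat.card (Hgp t S i) = Nat.card S := by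
  have hinj : Function.Injective (MonoidHom.mulSingle (fun _ : Fin t => S) i) := by
    intro a b hab
    have := congrFun hab i
    simpa using this
  have := Nat.card_range_of_injective hinj
  exact this

private lemma mulSingle_ne_one {i : Fin t} {s : S} (hs : s ≠ 1) :
    Pi.mulSingle i s ≠ (1 : Fin t → S) := by
  intro h
  exact hs (by simpa using congrFun h i)

private lemma Hgp_inj {i j : Fin t} (h : Hgp t S i = Hgp t S j) : i = j := by
  obtain ⟨s₀, hs₀⟩ := exists_ne (1 : S)
  have : Pi.mulSingle i s₀ ∈ Hgp t S j := by
    rw [← h]; exact ⟨s₀, rfl⟩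
  obtain ⟨s', hs'⟩ := this
  by_contra hij
  have := congrFun hs' i
  rw [MonoidHom.mulSingle_apply, Pi.mulSingle_eq_same,
    Pi.mulSingle_eq_of_ne hij] at this
  exact hs₀ this.symm

/-- Every nontrivial normal subgroup of `S^t` contains a factor. -/
private lemma exists_Hgp_le (hnab : ∃ a b : S, a * b ≠ b * a)
    (K : Subgroup (Fin t → S)) (hn : K.Normal) (hK : K ≠ ⊥) :
    ∃ i, Hgp t S i ≤ K := by
  classical
  obtain ⟨k, hkK, hk1⟩ : ∃ k ∈ K, k ≠ 1 := by
    by_contra h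
    push_neg at h
    exact hK (Subgroup.eq_bot_iff_forall K |>.mpr h)
  obtain ⟨i, hki⟩ : ∃ i, k i ≠ 1 := by
    by_contra h
    push_neg at h
    exact hk1 (funext h)
  obtain ⟨s, hs⟩ : ∃ s : S, s * k i ≠ k i * s := by
    by_contra h
    push_neg at h
    exact hki (center_eq_bot hnab (k i) (fun y => (h y).symm))
  set n : Fin t → S := (Pi.mulSingle i s : Fin t → S) with hn_def
  set c : Fin t → S := (k⁻¹ * (n * k * n⁻¹) : Fin t → S) with hc_def
  have hcK : c ∈ K := by
    exact K.mul_mem (K.inv_mem hkK) (hn.conj_mem k hkK n)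
  have hceq : c = Pi.mulSingle i ((k i)⁻¹ * (s * k i * s⁻¹)) := by
    funext j
    by_cases h : j = i
    · subst h; simp [hc_def, hn_def]
    · simp [hc_def, hn_def, Pi.mulSingle, Function.update, h]
  have hci : (k i)⁻¹ * (s * k i * s⁻¹) ≠ 1 := by
    intro h
    apply hs
    have := congrArg (fun u => k i * u * s) h
    simpa [mul_assoc] using this
  -- the comap subgroup of S
  set K' : Subgroup S := K.comap (MonoidHom.mulSingle (fun _ : Fin t => S) i) with hK'
  have hK'norm : K'.Normal := by
    constructor
    intro x hx g
    have h5 : (MonoidHom.mulSingle (fun _ : Fin t => S) i) (g * x * g⁻¹) ∈ K := by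
      rw [map_mul, map_mul, map_inv]
      exact hn.conj_mem _ (Subgroup.mem_comap.mp hx) _
    exact Subgroup.mem_comap.mpr h5
  have hK'ne : K' ≠ ⊥ := by
    intro h
    have : (k i)⁻¹ * (s * k i * s⁻¹) ∈ K' := by
      show Pi.mulSingle i ((k i)⁻¹ * (s * k i * s⁻¹)) ∈ K
      rw [← hceq]; exact hcK
    rw [h, Subgroup.mem_bot] at this
    exact hci this
  have hK'top : K' = ⊤ :=
    (IsSimpleGroup.eq_bot_or_eq_top_of_normal K' hK'norm).resolve_left hK'ne
  refine ⟨i, ?_⟩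
  rintro v ⟨x, rfl⟩
  have : x ∈ K' := by rw [hK'top]; trivial
  exact this

private lemma aut_pi_structure (hnab : ∃ a b : S, a * b ≠ b * a)
    (g : MulAut (Fin t → S)) :
    ∃ (σ : Equiv.Perm (Fin t)) (φ : Fin t → MulAut S),
      ∀ (v : Fin t → S) (i : Fin t), g v i = φ i (v (σ⁻¹ i)) := by
  classical
  obtain ⟨s₀, hs₀⟩ := exists_ne (1 : S)
  have key : ∀ (e : MulAut (Fin t → S)) (j : Fin t),
      ∃ i, (Hgp t S j).map e.toMonoidHom = Hgp t S i := by
    intro e j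
    have hn : ((Hgp t S j).map e.toMonoidHom).Normal :=
      (Hgp_normal j).map e.toMonoidHom e.surjective
    have hnb : (Hgp t S j).map e.toMonoidHom ≠ ⊥ := by
      intro h
      have hmem : e (Pi.mulSingle j s₀) ∈ (Hgp t S j).map e.toMonoidHom :=
        ⟨Pi.mulSingle j s₀, ⟨s₀, rfl⟩, rfl⟩
      rw [h, Subgroup.mem_bot] at hmem
      have : Pi.mulSingle j s₀ = (1 : Fin t → S) := by
        apply e.injective
        rw [hmem, map_one]
      exact mulSingle_ne_one hs₀ this
    obtain ⟨i, hi⟩ := exists_Hgp_le hnab _ hn hnb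
    refine ⟨i, ?_⟩
    have hc : Nat.card ((Hgp t S j).map e.toMonoidHom) = Nat.card (Hgp t S i) := by
      rw [card_Hgp, ← card_Hgp (S := S) j]
      exact (Nat.card_congr ((Hgp t S j).equivMapOfInjective e.toMonoidHom
        e.injective).toEquiv).symm
    exact (Subgroup.eq_of_le_of_card_ge hi (le_of_eq hc)).symm
  set σ₀ : Fin t → Fin t := fun j => (key g j).choose with hσ₀def
  have hσ₀ : ∀ j, (Hgp t S j).map g.toMonoidHom = Hgp t S (σ₀ j) :=
    fun j => (key g j).choose_spec
  have hinj : Function.Injective σ₀ := by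
    intro j j' h
    apply Hgp_inj (S := S)
    apply Subgroup.map_injective (f := g.toMonoidHom) g.injective
    rw [hσ₀ j, hσ₀ j', h]
  set σ : Equiv.Perm (Fin t) := Equiv.ofBijective σ₀ (Finite.injective_iff_bijective.mp hinj)
    with hσdef
  have hσ : ∀ j, σ j = σ₀ j := fun j => rfl
  set f : Fin t → (S →* S) := fun j =>
    (Pi.evalMonoidHom (fun _ : Fin t => S) (σ₀ j)).comp
      (g.toMonoidHom.comp (MonoidHom.mulSingle (fun _ : Fin t => S) j)) with hfdef
  have hf : ∀ j s, g (Pi.mulSingle j s) = Pi.mulSingle (σ₀ j) (f j s) := by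
    intro j s
    have hmem : g (Pi.mulSingle j s) ∈ Hgp t S (σ₀ j) := by
      rw [← hσ₀ j]
      exact ⟨Pi.mulSingle j s, ⟨s, rfl⟩, rfl⟩
    obtain ⟨s', hs'⟩ := hmem
    have hval : f j s = s' := by
      show g (Pi.mulSingle j s) (σ₀ j) = s'
      rw [← hs']
      simp
    rw [hval, ← MonoidHom.mulSingle_apply]
    exact hs'.symm
  have hfinj : ∀ j, Function.Injective (f j) := by
    intro j a b hab
    have h1 : g (Pi.mulSingle j a) = g (Pi.mulSingle j b) := by
      rw [hf j a, hf j b, hab]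
    have := g.injective h1
    simpa using congrFun this j
  set φ : Fin t → MulAut S := fun j =>
    MulEquiv.ofBijective (f j) (Finite.injective_iff_bijective.mp (hfinj j)) with hφdef
  have hφ : ∀ j s, φ j s = f j s := fun j s => rfl
  refine ⟨σ, fun i => φ (σ⁻¹ i), fun v i => ?_⟩
  have hji : σ₀ (σ⁻¹ i) = i := by
    rw [← hσ (σ⁻¹ i)]
    exact σ.apply_symm_apply i
  have hext : (Pi.evalMonoidHom (fun _ : Fin t => S) i).comp g.toMonoidHom
      = ((φ (σ⁻¹ i)) : S →* S).comp (Pi.evalMonoidHom (fun _ : Fin t => S) (σ⁻¹ i)) := by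
    apply MonoidHom.pi_ext
    intro k s
    simp only [MonoidHom.comp_apply, Pi.evalMonoidHom_apply, MulEquiv.coe_toMonoidHom]
    by_cases hk : k = (σ⁻¹ i : Fin t)
    · subst hk
      rw [hf, hji]
      simp [hφ]
    · have h2 : σ₀ k ≠ i := by
        intro h
        exact hk (hinj (by rw [hji, h]))
      rw [hf]
      rw [Pi.mulSingle_eq_of_ne (Ne.symm h2), Pi.mulSingle_eq_of_ne (Ne.symm hk), map_one]
  have := DFunLike.congr_fun hext v
  simpa using this

end Struct

section Holo

variable {S : Type*} [Group S] {t : ℕ}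

private def holo (σ : Equiv.Perm (Fin t)) (a : Fin t → MulAut S) : ℕ → Fin t → MulAut S
  | 0 => fun _ => 1
  | n + 1 => fun i => a i * holo σ a n (σ⁻¹ i)

private lemma holo_zero (σ : Equiv.Perm (Fin t)) (a : Fin t → MulAut S) (i : Fin t) :
    holo σ a 0 i = 1 := rfl

private lemma holo_succ (σ : Equiv.Perm (Fin t)) (a : Fin t → MulAut S) (n : ℕ) (i : Fin t) :
    holo σ a (n + 1) i = a i * holo σ a n (σ⁻¹ i) := rfl

private lemma perm_pow_succ_inv (σ : Equiv.Perm (Fin t)) (n : ℕ) (i : Fin t) :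
    ((σ ^ (n + 1))⁻¹ : Equiv.Perm (Fin t)) i = (σ ^ n)⁻¹ (σ⁻¹ i) := by
  rw [pow_succ', mul_inv_rev]
  rfl

private lemma perm_pow_succ_inv'' (σ : Equiv.Perm (Fin t)) (n : ℕ) (i : Fin t) :
    σ⁻¹ (((σ ^ n)⁻¹ : Equiv.Perm (Fin t)) i) = ((σ ^ (n + 1))⁻¹ : Equiv.Perm (Fin t)) i := by
  rw [pow_succ, mul_inv_rev]
  rfl

private lemma perm_pow_comm (σ : Equiv.Perm (Fin t)) (m k : ℕ) (j : Fin t) :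
    (σ ^ m) ((σ ^ k) j) = (σ ^ k) ((σ ^ m) j) := by
  have h : σ ^ m * σ ^ k = σ ^ k * σ ^ m := ((Commute.refl σ).pow_pow m k).eq
  calc (σ ^ m) ((σ ^ k) j) = (σ ^ m * σ ^ k) j := rfl
    _ = (σ ^ k * σ ^ m) j := by rw [h]
    _ = (σ ^ k) ((σ ^ m) j) := rfl

private lemma holo_spec {g : MulAut (Fin t → S)} {σ : Equiv.Perm (Fin t)}
    {a : Fin t → MulAut S} (hg : ∀ v i, g v i = a i (v (σ⁻¹ i))) :
    ∀ (n : ℕ) (v : Fin t → S) (i : Fin t),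
      (g ^ n) v i = holo σ a n i (v ((σ ^ n)⁻¹ i)) := by
  intro n
  induction n with
  | zero => intro v i; simp [holo_zero]
  | succ n ih =>
    intro v i
    have h1 : (g ^ (n + 1)) v = g ((g ^ n) v) := by
      rw [pow_succ']
      rfl
    rw [h1, hg, ih, holo_succ, perm_pow_succ_inv]
    rfl

private lemma holo_add (σ : Equiv.Perm (Fin t)) (a : Fin t → MulAut S) :
    ∀ (m n : ℕ) (i : Fin t),
      holo σ a (m + n) i = holo σ a m i * holo σ a n ((σ ^ m)⁻¹ i) := by
  intro m
  induction m with
  | zero => intro n i; simp [holo_zero]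
  | succ m ih =>
    intro n i
    have : m + 1 + n = (m + n) + 1 := by omega
    rw [this, holo_succ, ih, holo_succ, perm_pow_succ_inv, mul_assoc]

private lemma holo_cycle_pow {σ : Equiv.Perm (Fin t)} {a : Fin t → MulAut S}
    {ℓ : ℕ} {i : Fin t} (hfix : (σ ^ ℓ) i = i) :
    ∀ n : ℕ, holo σ a (ℓ * n) i = (holo σ a ℓ i) ^ n := by
  have hfix' : ((σ ^ ℓ)⁻¹ : Equiv.Perm (Fin t)) i = i := by
    conv_lhs => rw [← hfix]
    exact Equiv.symm_apply_apply _ _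
  intro n
  induction n with
  | zero => simp [holo_zero]
  | succ n ih =>
    have : ℓ * (n + 1) = ℓ + ℓ * n := by ring
    rw [this, holo_add, hfix', ih, pow_succ']

private lemma holo_conj {σ : Equiv.Perm (Fin t)} {a : Fin t → MulAut S}
    {ℓ : ℕ} {j : Fin t} (hfix : (σ ^ ℓ) j = j) :
    holo σ a ℓ (σ j) = a (σ j) * holo σ a ℓ j * (a (σ j))⁻¹ := by
  have hfix2 : ((σ ^ ℓ)⁻¹ : Equiv.Perm (Fin t)) (σ j) = σ j := by
    have h1 : (σ ^ ℓ) (σ j) = σ j := by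
      have : σ ^ ℓ * σ = σ * σ ^ ℓ := ((Commute.refl σ).pow_left ℓ).eq
      calc (σ ^ ℓ) (σ j) = (σ ^ ℓ * σ) j := rfl
        _ = (σ * σ ^ ℓ) j := by rw [this]
        _ = σ ((σ ^ ℓ) j) := rfl
        _ = σ j := by rw [hfix]
    conv_lhs => rw [← h1]
    exact Equiv.symm_apply_apply _ _
  have e1 : holo σ a (ℓ + 1) (σ j) = a (σ j) * holo σ a ℓ j := by
    rw [holo_succ]
    congr 2
    exact Equiv.symm_apply_apply _ _
  have e2 : holo σ a (ℓ + 1) (σ j) = holo σ a ℓ (σ j) * a (σ j) := by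
    rw [holo_add, hfix2, holo_succ, holo_zero, mul_one]
  rw [← e1, e2]
  group

private lemma holo_order_cycle {σ : Equiv.Perm (Fin t)} {a : Fin t → MulAut S}
    {ℓ : ℕ} {j : Fin t} (hfix : (σ ^ ℓ) j = j) :
    ∀ k : ℕ, orderOf (holo σ a ℓ ((σ ^ k) j)) = orderOf (holo σ a ℓ j) := by
  intro k
  induction k with
  | zero => rfl
  | succ k ih =>
    have hfixk : (σ ^ ℓ) ((σ ^ k) j) = (σ ^ k) j := by
      have : σ ^ ℓ * σ ^ k = σ ^ k * σ ^ ℓ := ((Commute.refl σ).pow_pow ℓ k).eq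
      calc (σ ^ ℓ) ((σ ^ k) j) = (σ ^ ℓ * σ ^ k) j := rfl
        _ = (σ ^ k * σ ^ ℓ) j := by rw [this]
        _ = (σ ^ k) ((σ ^ ℓ) j) := rfl
        _ = (σ ^ k) j := by rw [hfix]
    have hstep : (σ ^ (k + 1)) j = σ ((σ ^ k) j) := by
      rw [pow_succ']
      rfl
    rw [hstep, holo_conj hfixk]
    have : orderOf (a (σ ((σ ^ k) j)) * holo σ a ℓ ((σ ^ k) j) * (a (σ ((σ ^ k) j)))⁻¹)
        = orderOf (holo σ a ℓ ((σ ^ k) j)) := by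
      exact orderOf_conj_eq _ _
    rw [this, ih]

end Holo

section MoreHelpers

variable {G : Type*} [Group G]

private lemma conj_aut_eq' (β : MulAut G) (m : G) :
    β * MulAut.conj m * β⁻¹ = MulAut.conj (β m) := by
  ext v
  simp [MulAut.conj, mul_assoc]

private lemma key_count [Finite G] (x : MulAut G) :
    Nat.card (Set.range (fun c : G => MulAut.conj c * x * (MulAut.conj c)⁻¹)) *
      Nat.card ((Subgroup.centralizer {x}).comap (MulAut.conj : G →* MulAut G))
      = Nat.card G := by
  apply card_range_mul_card_subgroup
  intro a b
  rw [conj_comm_iff]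
  rw [Subgroup.mem_comap, map_mul, map_inv, Subgroup.mem_centralizer_iff]
  simp only [Set.mem_singleton_iff, forall_eq]

private lemma mem_conj_centralizer_iff
    (hinj : ∀ a b : G, (MulAut.conj a : MulAut G) = MulAut.conj b → a = b)
    (x : MulAut G) (c : G) :
    c ∈ (Subgroup.centralizer {x}).comap (MulAut.conj : G →* MulAut G) ↔ x c = c := by
  rw [Subgroup.mem_comap, Subgroup.mem_centralizer_iff]
  simp only [Set.mem_singleton_iff, forall_eq]
  constructor
  · intro h
    have h2 : x * MulAut.conj c * x⁻¹ = MulAut.conj c := by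
      rw [h]; group
    rw [conj_aut_eq'] at h2
    exact hinj _ _ h2
  · intro h
    have h2 := conj_aut_eq' x c
    rw [h] at h2
    calc x * MulAut.conj c = (x * MulAut.conj c * x⁻¹) * x := by group
      _ = MulAut.conj c * x := by rw [h2]

private lemma conj_inj_of_center' (hc : ∀ z : G, (∀ y : G, z * y = y * z) → z = 1)
    {a b : G} (hab : (MulAut.conj a : MulAut G) = MulAut.conj b) : a = b := by
  have h1 : ∀ y : G, a * y * a⁻¹ = b * y * b⁻¹ := fun y => by
    have := congrArg (fun e : MulAut G => e y) hab
    simpa [MulAut.conj] using this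
  have h2 : ∀ y : G, (b⁻¹ * a) * y = y * (b⁻¹ * a) := by
    intro y
    have h3 : b⁻¹ * (a * y * a⁻¹) * b = y := by rw [h1 y]; group
    have h4 : (b⁻¹ * a) * y * (b⁻¹ * a)⁻¹ = y := by
      simpa [mul_assoc] using h3
    rw [mul_inv_eq_iff_eq_mul] at h4
    exact h4
  have : b⁻¹ * a = 1 := hc _ h2
  have := congrArg (fun u => b * u) this
  simpa using this

end MoreHelpers
/-- Lemma 2.2: let `S` be a nonabelian finite simple group, `t ≥ 1`, `p` a prime, and
`M > 0` a real number.  Suppose that for every `α ∈ Aut(S)` the coset `ι_S(S)·α` contains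
an element `x` of `p`-power order whose orbit under conjugation by inner automorphisms has
size at least `M`.  Then for every `p`-element `g` of `Aut(S^t)`, the coset `ι_N(N)·g`
(where `N = S^t`) contains at least `M^t` elements of `p`-power order. -/
theorem coset_p_elements_in_aut_of_direct_power
    (S : Type*) [Group S] [Finite S] [IsSimpleGroup S]
    (hnab : ∃ a b : S, a * b ≠ b * a)
    (t : ℕ) (ht : 0 < t) (p : ℕ) (hp : p.Prime) (M : ℝ) (hM : 0 < M)
    (hS : ∀ α : MulAut S, ∃ x : MulAut S,
      (∃ s : S, x = MulAut.conj s * α) ∧ (∃ k : ℕ, orderOf x = p ^ k) ∧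
      M ≤ (Nat.card {y : MulAut S | ∃ s : S, y = MulAut.conj s * x * (MulAut.conj s)⁻¹} : ℝ)) :
    ∀ g : MulAut (Fin t → S), (∃ k : ℕ, orderOf g = p ^ k) →
      M ^ t ≤ (Nat.card {x : MulAut (Fin t → S) |
        (∃ v : Fin t → S, x = MulAut.conj v * g) ∧ ∃ k : ℕ, orderOf x = p ^ k} : ℝ) := by
  classical
  intro g hg
  -- basic injectivity facts
  have hcS : ∀ z : S, (∀ y : S, z * y = y * z) → z = 1 := center_eq_bot hnab
  have hcN : ∀ z : Fin t → S, (∀ y : Fin t → S, z * y = y * z) → z = 1 := by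
    intro z hz
    funext i
    apply hcS
    intro y
    have := congrFun (hz (Pi.mulSingle i y)) i
    simpa using this
  -- structure of g
  obtain ⟨σ, φ, hgφ⟩ := aut_pi_structure hnab g
  obtain ⟨kg, hkg⟩ := hg
  obtain ⟨s₀, hs₀⟩ := exists_ne (1 : S)
  -- σ has p-power order
  have hσpow : σ ^ (p ^ kg) = 1 := by
    have hgone : g ^ (p ^ kg) = 1 := by rw [← hkg]; exact pow_orderOf_eq_one g
    have hform := holo_spec hgφ (p ^ kg)
    have hfix : ∀ i : Fin t, ((σ ^ (p ^ kg))⁻¹ : Equiv.Perm (Fin t)) i = i := by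
      intro i
      by_contra hne
      set j := ((σ ^ (p ^ kg))⁻¹ : Equiv.Perm (Fin t)) i with hj
      have h1 := hform (Pi.mulSingle j s₀) i
      rw [hgone] at h1
      simp only [MulAut.one_apply] at h1
      rw [← hj, Pi.mulSingle_eq_same] at h1
      rw [Pi.mulSingle_eq_of_ne (Ne.symm hne)] at h1
      have : s₀ = 1 := (holo σ φ (p ^ kg) i).injective (by rw [← h1, map_one])
      exact hs₀ this
    ext i
    have := hfix i
    have h2 : (σ ^ (p ^ kg)) (((σ ^ (p ^ kg))⁻¹ : Equiv.Perm (Fin t)) i) = (σ ^ (p ^ kg)) i := by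
      rw [this]
    rw [Equiv.Perm.coe_inv, Equiv.apply_symm_apply] at h2
    exact congrArg Fin.val h2.symm
  have hσdvd : orderOf σ ∣ p ^ kg := orderOf_dvd_of_pow_eq_one hσpow
  obtain ⟨aσ, haσE, hLpow⟩ := (Nat.dvd_prime_pow hp).mp hσdvd
  have hLpos : 0 < orderOf σ := orderOf_pos σ
  have hLfix : ∀ j : Fin t, (σ ^ orderOf σ) j = j := by
    intro j; rw [pow_orderOf_eq_one]; rfl
  -- cycle quotient
  set Q := Quotient (Equiv.Perm.SameCycle.setoid σ) with hQdef
  letI : Fintype Q := Fintype.ofFinite Q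
  set mk : Fin t → Q := fun i => Quotient.mk (Equiv.Perm.SameCycle.setoid σ) i with hmkdef
  set out : Q → Fin t := Quotient.out with houtdef
  set ℓ : Q → ℕ := fun q => Function.minimalPeriod (⇑σ) (out q) with hℓdef
  have hiter : ∀ (n : ℕ) (j : Fin t), (⇑σ)^[n] j = (σ ^ n) j := by
    intro n
    induction n with
    | zero => intro j; rfl
    | succ n ih =>
      intro j
      rw [Function.iterate_succ_apply, ih (σ j), pow_succ]
      rfl
  have hper : ∀ j : Fin t, Function.IsPeriodicPt (⇑σ) (orderOf σ) j := by
    intro j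
    show (⇑σ)^[orderOf σ] j = j
    rw [hiter]; exact hLfix j
  have hℓpos : ∀ q, 0 < ℓ q := fun q =>
    Function.IsPeriodicPt.minimalPeriod_pos hLpos (hper (out q))
  have hℓdvd : ∀ q, ℓ q ∣ orderOf σ := fun q => (hper (out q)).minimalPeriod_dvd
  have hℓfix : ∀ q, (σ ^ ℓ q) (out q) = out q := by
    intro q
    have h1 := Function.isPeriodicPt_minimalPeriod (⇑σ) (out q)
    have : (⇑σ)^[ℓ q] (out q) = out q := h1
    rwa [hiter] at this
  have hℓmin : ∀ (q : Q) (k : ℕ), 0 < k → k < ℓ q → (σ ^ k) (out q) ≠ out q := by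
    intro q k hk hkℓ h
    have h1 : Function.IsPeriodicPt (⇑σ) k (out q) := by
      show (⇑σ)^[k] (out q) = out q
      rw [hiter]; exact h
    have h2 := h1.minimalPeriod_le hk
    have h3 : ℓ q = Function.minimalPeriod (⇑σ) (out q) := rfl
    omega
  have hmkout : ∀ q : Q, mk (out q) = q := fun q => Quotient.out_eq q
  have hsc : ∀ (q : Q) (k : ℕ), mk ((σ ^ k) (out q)) = q := by
    intro q k
    have h1 : σ.SameCycle (out q) ((σ ^ k) (out q)) := ⟨(k : ℤ), by rw [zpow_natCast]⟩
    calc mk ((σ ^ k) (out q)) = mk (out q) := (Quotient.sound h1).symm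
      _ = q := hmkout q
  have hreach : ∀ i : Fin t, ∃ k : ℕ, (σ ^ k) (out (mk i)) = i := by
    intro i
    have h1 : σ.SameCycle (out (mk i)) i := @Quotient.mk_out _ (Equiv.Perm.SameCycle.setoid σ) i
    obtain ⟨k, _, _, hk⟩ := h1.exists_pow_eq σ
    exact ⟨k, hk⟩
  have hfixAll : ∀ (q : Q) (i : Fin t), mk i = q → (σ ^ ℓ q) i = i := by
    intro q i hqi
    obtain ⟨k, hk⟩ : ∃ k : ℕ, (σ ^ k) (out q) = i := by subst hqi; exact hreach i
    rw [← hk, perm_pow_comm, hℓfix q]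
  -- the chosen p-elements in Aut S
  set α : Q → MulAut S := fun q => holo σ φ (ℓ q) (out q) with hαdef
  have hSq := fun q : Q => hS (α q)
  choose xq hxcoset hxord hxorb using hSq
  choose sq hsq using hxcoset
  choose kxq hkxq using hxord
  set w : Fin t → S := fun i => if i = out (mk i) then sq (mk i) else 1 with hwdef
  set a : Fin t → MulAut S := fun i => MulAut.conj (w i) * φ i with hadef
  set x : MulAut (Fin t → S) := MulAut.conj w * g with hxdef
  have hxφ : ∀ (v : Fin t → S) (i : Fin t), x v i = a i (v (σ⁻¹ i)) := by
    intro v i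
    show (MulAut.conj w * g) v i = (MulAut.conj (w i) * φ i) (v (σ⁻¹ i))
    rw [MulAut.mul_apply, MulAut.mul_apply, MulAut.conj_apply, MulAut.conj_apply]
    simp only [Pi.mul_apply, Pi.inv_apply]
    rw [hgφ]
  -- w vanishes off representatives along a cycle
  have hwone : ∀ (q : Q) (m : ℕ), 1 ≤ m → m < ℓ q →
      w (((σ ^ m)⁻¹ : Equiv.Perm (Fin t)) (out q)) = 1 := by
    intro q m h1 h2
    have hne : ((σ ^ m)⁻¹ : Equiv.Perm (Fin t)) (out q) ≠ out q := by
      intro h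
      have h3 : (σ ^ m) (out q) = out q := by
        conv_lhs => rw [← h]
        exact Equiv.apply_symm_apply _ _
      exact hℓmin q m h1 h2 h3
    have hclass : mk (((σ ^ m)⁻¹ : Equiv.Perm (Fin t)) (out q)) = q := by
      have hsc2 : σ.SameCycle (out q) (((σ ^ m)⁻¹ : Equiv.Perm (Fin t)) (out q)) :=
        ⟨-(m : ℤ), by rw [zpow_neg, zpow_natCast]⟩
      calc mk (((σ ^ m)⁻¹ : Equiv.Perm (Fin t)) (out q)) = mk (out q) :=
            (Quotient.sound hsc2).symm
        _ = q := hmkout q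
    show (if ((σ ^ m)⁻¹ : Equiv.Perm (Fin t)) (out q)
        = out (mk (((σ ^ m)⁻¹ : Equiv.Perm (Fin t)) (out q))) then
        sq (mk (((σ ^ m)⁻¹ : Equiv.Perm (Fin t)) (out q))) else 1) = 1
    rw [hclass, if_neg hne]
  -- holonomy of a agrees with holonomy of φ along the cycle off the rep
  have hAΦ : ∀ (q : Q) (k m : ℕ), 1 ≤ m → k + m ≤ ℓ q →
      holo σ a k (((σ ^ m)⁻¹ : Equiv.Perm (Fin t)) (out q))
        = holo σ φ k (((σ ^ m)⁻¹ : Equiv.Perm (Fin t)) (out q)) := by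
    intro q k
    induction k with
    | zero => intro m _ _; rw [holo_zero, holo_zero]
    | succ k ih =>
      intro m h1 h2
      rw [holo_succ, holo_succ]
      have hw1 : w (((σ ^ m)⁻¹ : Equiv.Perm (Fin t)) (out q)) = 1 :=
        hwone q m h1 (by omega)
      have ha1 : a (((σ ^ m)⁻¹ : Equiv.Perm (Fin t)) (out q))
          = φ (((σ ^ m)⁻¹ : Equiv.Perm (Fin t)) (out q)) := by
        show MulAut.conj (w _) * φ _ = φ _
        rw [hw1, map_one, one_mul]
      rw [ha1, perm_pow_succ_inv'' σ m (out q), ih (m + 1) (by omega) (by omega)]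
  have hholo_out : ∀ q : Q, holo σ a (ℓ q) (out q) = xq q := by
    intro q
    obtain ⟨k, hk⟩ : ∃ k, ℓ q = k + 1 := ⟨ℓ q - 1, by have := hℓpos q; omega⟩
    have hwout : w (out q) = sq q := by
      show (if out q = out (mk (out q)) then sq (mk (out q)) else 1) = sq q
      rw [hmkout q, if_pos rfl]
    have ha2 : a (out q) = MulAut.conj (sq q) * φ (out q) := by
      show MulAut.conj (w (out q)) * φ (out q) = _
      rw [hwout]
    have hmid : holo σ a k (σ⁻¹ (out q)) = holo σ φ k (σ⁻¹ (out q)) := by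
      have := hAΦ q k 1 le_rfl (by omega)
      rwa [pow_one] at this
    rw [hsq q, hαdef]
    simp only
    rw [hk, holo_succ, holo_succ, ha2, hmid, mul_assoc]
  have hord2 : ∀ (q : Q) (i : Fin t), mk i = q →
      orderOf (holo σ a (ℓ q) i) = p ^ kxq q := by
    intro q i hqi
    obtain ⟨k, hk⟩ : ∃ k : ℕ, (σ ^ k) (out q) = i := by subst hqi; exact hreach i
    rw [← hk, holo_order_cycle (hℓfix q) k, hholo_out q, hkxq q]
  -- x is a p-element
  set E := Finset.univ.sup kxq with hEdef
  have hxpow : x ^ (orderOf σ * p ^ E) = 1 := by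
    have hform := holo_spec hxφ (orderOf σ * p ^ E)
    have hσ1 : σ ^ (orderOf σ * p ^ E) = 1 := by
      rw [pow_mul, pow_orderOf_eq_one, one_pow]
    apply MulEquiv.ext
    intro v
    funext i
    rw [hform v i, hσ1]
    have hhol : holo σ a (orderOf σ * p ^ E) i = 1 := by
      obtain ⟨d, hd⟩ := hℓdvd (mk i)
      have hfix : (σ ^ ℓ (mk i)) i = i := hfixAll (mk i) i rfl
      have : orderOf σ * p ^ E = ℓ (mk i) * (d * p ^ E) := by rw [hd]; ring
      rw [this, holo_cycle_pow hfix]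
      apply orderOf_dvd_iff_pow_eq_one.mp
      rw [hord2 (mk i) i rfl]
      exact (pow_dvd_pow p (Finset.le_sup (Finset.mem_univ _))).trans (dvd_mul_left _ d)
    rw [hhol]
    rfl
  have hxordP : ∃ k : ℕ, orderOf x = p ^ k := by
    have hdvd : orderOf x ∣ orderOf σ * p ^ E := orderOf_dvd_of_pow_eq_one hxpow
    rw [hLpow, ← pow_add] at hdvd
    obtain ⟨k, _, hk⟩ := (Nat.dvd_prime_pow hp).mp hdvd
    exact ⟨k, hk⟩
  have hconjinjN : ∀ a' b' : Fin t → S,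
      (MulAut.conj a' : MulAut (Fin t → S)) = MulAut.conj b' → a' = b' :=
    fun a' b' h => conj_inj_of_center' hcN h
  have hconjinjS : ∀ a' b' : S, (MulAut.conj a' : MulAut S) = MulAut.conj b' → a' = b' :=
    fun a' b' h => conj_inj_of_center' hcS h
  have hconj_formula : ∀ n : Fin t → S,
      MulAut.conj n * x * (MulAut.conj n)⁻¹ = MulAut.conj (n * w * (g n)⁻¹) * g := by
    intro n
    have h3 : g * (MulAut.conj n)⁻¹ = MulAut.conj ((g n)⁻¹) * g := by
      have h4 := conj_aut_eq' g n
      have h5 : g * (MulAut.conj n)⁻¹ * g⁻¹ = (MulAut.conj (g n))⁻¹ := by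
        rw [← h4]; group
      have h6 : MulAut.conj ((g n)⁻¹) = (MulAut.conj (g n))⁻¹ := map_inv _ _
      calc g * (MulAut.conj n)⁻¹ = (g * (MulAut.conj n)⁻¹ * g⁻¹) * g := by group
        _ = MulAut.conj ((g n)⁻¹) * g := by rw [h5, h6]
    calc MulAut.conj n * x * (MulAut.conj n)⁻¹
        = MulAut.conj n * MulAut.conj w * (g * (MulAut.conj n)⁻¹) := by
          rw [hxdef]; group
      _ = MulAut.conj n * MulAut.conj w * (MulAut.conj ((g n)⁻¹) * g) := by rw [h3]
      _ = MulAut.conj (n * w * (g n)⁻¹) * g := by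
          rw [map_mul, map_mul, map_inv]; group
  set f : (Fin t → S) → MulAut (Fin t → S) :=
    fun n => MulAut.conj n * x * (MulAut.conj n)⁻¹ with hfdef
  set K : Subgroup (Fin t → S) :=
    (Subgroup.centralizer {x}).comap
      (MulAut.conj : (Fin t → S) →* MulAut (Fin t → S)) with hKdef
  have hcount : Nat.card (Set.range f) * Nat.card K = Nat.card (Fin t → S) := key_count x
  have hKmem : ∀ n : Fin t → S, n ∈ K → ∀ i : Fin t, n i = a i (n (σ⁻¹ i)) := by
    intro n hn i
    have h1 : x n = n := (mem_conj_centralizer_iff hconjinjN x n).mp hn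
    have h2 := congrFun h1 i
    rw [hxφ n i] at h2
    exact h2.symm
  have hprop : ∀ n : Fin t → S, n ∈ K → ∀ (k : ℕ) (j : Fin t),
      n ((σ ^ k) j) = holo σ a k ((σ ^ k) j) (n j) := by
    intro n hn k
    induction k with
    | zero => intro j; simp [holo_zero]
    | succ k ih =>
      intro j
      have hstep : (σ ^ (k + 1)) j = σ ((σ ^ k) j) := by rw [pow_succ']; rfl
      rw [hstep, hKmem n hn (σ ((σ ^ k) j)), Equiv.Perm.coe_inv, Equiv.symm_apply_apply, ih j, holo_succ,
        Equiv.Perm.coe_inv, Equiv.symm_apply_apply]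
      rfl
  have hFmem : ∀ n : Fin t → S, n ∈ K → ∀ q : Q,
      holo σ a (ℓ q) (out q) (n (out q)) = n (out q) := by
    intro n hn q
    have h1 := hprop n hn (ℓ q) (out q)
    rw [hℓfix q] at h1
    exact h1.symm
  have hKle : Nat.card K ≤ ∏ q : Q, Nat.card {c : S // holo σ a (ℓ q) (out q) c = c} := by
    have hFinj : Function.Injective
        (fun (n : K) => fun (q : Q) =>
          (⟨(n : Fin t → S) (out q), hFmem n n.2 q⟩ :
            {c : S // holo σ a (ℓ q) (out q) c = c})) := by
      intro n n' h
      apply Subtype.ext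
      funext i
      obtain ⟨k, hk⟩ := hreach i
      have h1 := hprop n n.2 k (out (mk i))
      have h2 := hprop n' n'.2 k (out (mk i))
      have h3 : (n : Fin t → S) (out (mk i)) = (n' : Fin t → S) (out (mk i)) :=
        congrArg Subtype.val (congrFun h (mk i))
      rw [hk] at h1 h2
      rw [h1, h2, h3]
    calc Nat.card K ≤ Nat.card (∀ q : Q, {c : S // holo σ a (ℓ q) (out q) c = c}) :=
          Nat.card_le_card_of_injective _ hFinj
      _ = ∏ q : Q, Nat.card {c : S // holo σ a (ℓ q) (out q) c = c} := Nat.card_pi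
  have hfix_card : ∀ q : Q,
      M * (Nat.card {c : S // holo σ a (ℓ q) (out q) c = c} : ℝ) ≤ (Nat.card S : ℝ) := by
    intro q
    have hc := key_count (G := S) (xq q)
    have hsetEq : {y : MulAut S | ∃ s : S, y = MulAut.conj s * xq q * (MulAut.conj s)⁻¹}
        = Set.range (fun c : S => MulAut.conj c * xq q * (MulAut.conj c)⁻¹) := by
      ext y
      simp only [Set.mem_setOf_eq, Set.mem_range]
      constructor
      · rintro ⟨s1, hs1⟩
        exact ⟨s1, hs1.symm⟩
      · rintro ⟨s1, hs1⟩
        exact ⟨s1, hs1.symm⟩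
    have hMle := hxorb q
    rw [hsetEq] at hMle
    have hKS : Nat.card ((Subgroup.centralizer {xq q}).comap (MulAut.conj : S →* MulAut S))
        = Nat.card {c : S // holo σ a (ℓ q) (out q) c = c} := by
      apply Nat.card_congr
      apply Equiv.subtypeEquivRight
      intro c
      exact (mem_conj_centralizer_iff hconjinjS (xq q) c).trans (by rw [hholo_out q])
    have hprod : (Nat.card (Set.range fun c : S => MulAut.conj c * xq q * (MulAut.conj c)⁻¹) : ℝ)
        * (Nat.card {c : S // holo σ a (ℓ q) (out q) c = c} : ℝ) = (Nat.card S : ℝ) := by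
      rw [← hKS]
      exact_mod_cast congrArg (Nat.cast : ℕ → ℝ) hc
    calc M * (Nat.card {c : S // holo σ a (ℓ q) (out q) c = c} : ℝ)
        ≤ (Nat.card (Set.range fun c : S => MulAut.conj c * xq q * (MulAut.conj c)⁻¹) : ℝ)
          * (Nat.card {c : S // holo σ a (ℓ q) (out q) c = c} : ℝ) :=
          mul_le_mul_of_nonneg_right hMle (Nat.cast_nonneg _)
      _ = (Nat.card S : ℝ) := hprod
  -- fibers of the quotient map have size ℓ q
  have hfiber : ∀ q : Q, Nat.card {i : Fin t // mk i = q} = ℓ q := by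
    intro q
    have hbij : Function.Bijective
        (fun k : Fin (ℓ q) => (⟨(σ ^ (k : ℕ)) (out q), hsc q k⟩ : {i : Fin t // mk i = q})) := by
      constructor
      · intro k k' hkk'
        have hv : (σ ^ (k : ℕ)) (out q) = (σ ^ (k' : ℕ)) (out q) :=
          congrArg Subtype.val hkk'
        have key : ∀ k1 k2 : Fin (ℓ q), (k1 : ℕ) ≤ (k2 : ℕ) →
            (σ ^ (k1 : ℕ)) (out q) = (σ ^ (k2 : ℕ)) (out q) → k1 = k2 := by
          intro k1 k2 hle hv2
          have hpow : σ ^ (k2 : ℕ) = σ ^ ((k2 : ℕ) - (k1 : ℕ)) * σ ^ (k1 : ℕ) := by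
            rw [← pow_add]
            congr 1
            omega
          have h6 : (σ ^ ((k2 : ℕ) - (k1 : ℕ))) ((σ ^ (k1 : ℕ)) (out q))
              = (σ ^ (k1 : ℕ)) (out q) := by
            calc (σ ^ ((k2 : ℕ) - (k1 : ℕ))) ((σ ^ (k1 : ℕ)) (out q))
                = (σ ^ (k2 : ℕ)) (out q) := by rw [hpow]; rfl
              _ = (σ ^ (k1 : ℕ)) (out q) := hv2.symm
          rw [perm_pow_comm] at h6
          have h7 : (σ ^ ((k2 : ℕ) - (k1 : ℕ))) (out q) = out q :=
            (σ ^ (k1 : ℕ)).injective h6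
          by_contra hne
          have hlt : (k2 : ℕ) - (k1 : ℕ) < ℓ q := by
            have := k2.2
            omega
          have hposd : 0 < (k2 : ℕ) - (k1 : ℕ) := by
            rcases Nat.lt_or_ge (k1 : ℕ) (k2 : ℕ) with h | h
            · omega
            · exfalso; exact hne (Fin.ext (by omega))
          exact hℓmin q _ hposd hlt h7
        rcases le_or_gt (k : ℕ) (k' : ℕ) with h | h
        · exact key k k' h hv
        · exact (key k' k (le_of_lt h) hv.symm).symm
      · rintro ⟨i, hi⟩
        obtain ⟨k, hk⟩ : ∃ k : ℕ, (σ ^ k) (out q) = i := by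
          subst hi; exact hreach i
        refine ⟨⟨k % ℓ q, Nat.mod_lt _ (hℓpos q)⟩, Subtype.ext ?_⟩
        show (σ ^ (k % ℓ q)) (out q) = i
        have hfixpow : ∀ d : ℕ, ((σ ^ ℓ q) ^ d) (out q) = out q := by
          intro d
          induction d with
          | zero => rfl
          | succ d ihd =>
            calc ((σ ^ ℓ q) ^ (d + 1)) (out q) = (σ ^ ℓ q) (((σ ^ ℓ q) ^ d) (out q)) := by
                  rw [pow_succ']; rfl
              _ = (σ ^ ℓ q) (out q) := by rw [ihd]
              _ = out q := hℓfix q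
        have hsplit : σ ^ k = σ ^ (k % ℓ q) * (σ ^ ℓ q) ^ (k / ℓ q) := by
          rw [← pow_mul, ← pow_add]
          congr 1
          exact (Nat.mod_add_div k (ℓ q)).symm
        rw [← hk, hsplit]
        symm
        calc (σ ^ (k % ℓ q) * (σ ^ ℓ q) ^ (k / ℓ q)) (out q)
            = (σ ^ (k % ℓ q)) (((σ ^ ℓ q) ^ (k / ℓ q)) (out q)) := rfl
          _ = (σ ^ (k % ℓ q)) (out q) := by rw [hfixpow]
    have := Nat.card_eq_of_bijective _ hbij
    rw [← this, Nat.card_eq_fintype_card, Fintype.card_fin]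
  have hsum : ∑ q : Q, ℓ q = t := by
    have e := Equiv.sigmaFiberEquiv (fun i : Fin t => mk i)
    have h1 : Nat.card ((q : Q) × {i : Fin t // mk i = q}) = t := by
      rw [Nat.card_congr e, Nat.card_eq_fintype_card, Fintype.card_fin]
    rw [Nat.card_eq_fintype_card, Fintype.card_sigma] at h1
    calc ∑ q : Q, ℓ q = ∑ q : Q, Nat.card {i : Fin t // mk i = q} := by
          refine Finset.sum_congr rfl fun q _ => (hfiber q).symm
      _ = ∑ q : Q, Fintype.card {i : Fin t // mk i = q} := by
          refine Finset.sum_congr rfl fun q _ => Nat.card_eq_fintype_card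
      _ = t := h1
  -- final assembly
  have hsub : Set.range f ⊆ {y : MulAut (Fin t → S) |
      (∃ v : Fin t → S, y = MulAut.conj v * g) ∧ ∃ k : ℕ, orderOf y = p ^ k} := by
    rintro y ⟨n, rfl⟩
    constructor
    · exact ⟨n * w * (g n)⁻¹, hconj_formula n⟩
    · obtain ⟨k, hk⟩ := hxordP
      refine ⟨k, ?_⟩
      show orderOf (MulAut.conj n * x * (MulAut.conj n)⁻¹) = p ^ k
      rw [orderOf_conj_eq, hk]
  have hle1 : (Nat.card (Set.range f) : ℝ) ≤ (Nat.card {y : MulAut (Fin t → S) |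
      (∃ v : Fin t → S, y = MulAut.conj v * g) ∧ ∃ k : ℕ, orderOf y = p ^ k} : ℝ) := by
    exact_mod_cast Nat.card_mono (Set.toFinite _) hsub
  have hNcard : Nat.card (Fin t → S) = Nat.card S ^ t := by
    rw [Nat.card_pi, Finset.prod_const, Finset.card_univ, Fintype.card_fin]
  have hFpos : ∀ q : Q, (0 : ℝ) < (Nat.card {c : S // holo σ a (ℓ q) (out q) c = c} : ℝ) := by
    intro q
    have hne : Nonempty {c : S // holo σ a (ℓ q) (out q) c = c} := ⟨⟨1, map_one _⟩⟩
    exact_mod_cast Nat.card_pos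
  have hprodFpos : (0 : ℝ) < ∏ q : Q, (Nat.card {c : S // holo σ a (ℓ q) (out q) c = c} : ℝ) :=
    Finset.prod_pos (fun q _ => hFpos q)
  have hMS : M ≤ (Nat.card S : ℝ) := by
    have h1 := hfix_card (mk ⟨0, ht⟩)
    have h2 : (1 : ℝ) ≤ (Nat.card {c : S // holo σ a (ℓ (mk ⟨0, ht⟩)) (out (mk ⟨0, ht⟩)) c = c} : ℝ) := by
      have := hFpos (mk ⟨0, ht⟩)
      have h3 : (1 : ℕ) ≤ Nat.card {c : S // holo σ a (ℓ (mk ⟨0, ht⟩)) (out (mk ⟨0, ht⟩)) c = c} := by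
        exact_mod_cast this
      exact_mod_cast h3
    nlinarith
  have hperq : ∀ q : Q, M ^ ℓ q * (Nat.card {c : S // holo σ a (ℓ q) (out q) c = c} : ℝ)
      ≤ (Nat.card S : ℝ) ^ ℓ q := by
    intro q
    have hF0 : (0 : ℝ) ≤ (Nat.card {c : S // holo σ a (ℓ q) (out q) c = c} : ℝ) :=
      Nat.cast_nonneg _
    have hMF := hfix_card q
    obtain ⟨k, hk⟩ : ∃ k, ℓ q = k + 1 := ⟨ℓ q - 1, by have := hℓpos q; omega⟩
    have e1 : M ^ ℓ q = M ^ k * M := by rw [hk, pow_succ]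
    have e2 : (Nat.card S : ℝ) ^ ℓ q = (Nat.card S : ℝ) ^ k * (Nat.card S : ℝ) := by
      rw [hk, pow_succ]
    rw [e1, e2]
    calc M ^ k * M * (Nat.card {c : S // holo σ a (ℓ q) (out q) c = c} : ℝ)
        = M ^ k * (M * (Nat.card {c : S // holo σ a (ℓ q) (out q) c = c} : ℝ)) := by ring
      _ ≤ (Nat.card S : ℝ) ^ k * (Nat.card S : ℝ) := by
          apply mul_le_mul
          · exact pow_le_pow_left₀ (le_of_lt hM) hMS k
          · exact hMF
          · exact mul_nonneg (le_of_lt hM) hF0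
          · positivity
  have hchain : M ^ t * ∏ q : Q, (Nat.card {c : S // holo σ a (ℓ q) (out q) c = c} : ℝ)
      ≤ (Nat.card (Set.range f) : ℝ)
        * ∏ q : Q, (Nat.card {c : S // holo σ a (ℓ q) (out q) c = c} : ℝ) := by
    calc M ^ t * ∏ q : Q, (Nat.card {c : S // holo σ a (ℓ q) (out q) c = c} : ℝ)
        = ∏ q : Q, (M ^ ℓ q * (Nat.card {c : S // holo σ a (ℓ q) (out q) c = c} : ℝ)) := by
          rw [Finset.prod_mul_distrib, Finset.prod_pow_eq_pow_sum, hsum]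
      _ ≤ ∏ q : Q, (Nat.card S : ℝ) ^ ℓ q := by
          apply Finset.prod_le_prod
          · intro q _
            positivity
          · intro q _
            exact hperq q
      _ = (Nat.card S : ℝ) ^ t := by rw [Finset.prod_pow_eq_pow_sum, hsum]
      _ = (Nat.card (Fin t → S) : ℝ) := by rw [hNcard]; push_cast; ring
      _ = (Nat.card (Set.range f) : ℝ) * (Nat.card K : ℝ) := by
          exact_mod_cast (congrArg (Nat.cast : ℕ → ℝ) hcount).symm
      _ ≤ (Nat.card (Set.range f) : ℝ)
          * ∏ q : Q, (Nat.card {c : S // holo σ a (ℓ q) (out q) c = c} : ℝ) := by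
          apply mul_le_mul_of_nonneg_left _ (Nat.cast_nonneg _)
          calc (Nat.card K : ℝ)
              ≤ ((∏ q : Q, Nat.card {c : S // holo σ a (ℓ q) (out q) c = c} : ℕ) : ℝ) := by
                exact_mod_cast hKle
            _ = ∏ q : Q, (Nat.card {c : S // holo σ a (ℓ q) (out q) c = c} : ℝ) := by
                push_cast
                rfl
  calc M ^ t ≤ (Nat.card (Set.range f) : ℝ) := le_of_mul_le_mul_right hchain hprodFpos
    _ ≤ _ := hle1
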